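/- Let μ_a < μ_b be small dominant weights of an irreducible reduced root system R, and let β be a positive root with ⟨μ_a, β⟩ = 0 and ⟨μ_b, β∨⟩ = 2. Then the orbit (W_{μ_a} ∩ W_{μ_b})(β) equals the set of positive roots α with ⟨μ_a, α⟩ = 0, ⟨μ_b, α∨⟩ = 2, and ⟨α, α⟩ = ⟨β, β⟩. -/

import Mathlib

open RealInnerProductSpace

noncomputable section

variable {E : Type*} [NormedAddCommGroup E] [InnerProductSpace ℝ E] [FiniteDimensional ℝ E]

/-- The coroot `α∨ = 2α/⟨α,α⟩` of a vector `α`. -/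
def coroot (α : E) : E := (2 / ⟪α, α⟫) • α

/-- The orthogonal reflection across the hyperplane perpendicular to `α`. -/
def reflAt (α : E) : E ≃ₗᵢ[ℝ] E := Submodule.reflection (ℝ ∙ α)ᗮ

/-- An irreducible reduced crystallographic root system with a choice of positive roots. -/
structure IsRootSystem (R Rpos : Finset E) : Prop where
  pos_subset : Rpos ⊆ R
  ne_zero : ∀ α ∈ R, α ≠ 0
  span_top : Submodule.span ℝ (R : Set E) = ⊤
  reduced : ∀ α ∈ R, ∀ c : ℝ, c • α ∈ (R : Set E) → c = 1 ∨ c = -1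
  refl_mem : ∀ α ∈ R, ∀ β ∈ R, reflAt α β ∈ R
  cryst : ∀ α ∈ R, ∀ β ∈ R, ∃ k : ℤ, ⟪β, coroot α⟫ = (k : ℝ)
  pos_split : ∀ α ∈ R, Xor' (α ∈ Rpos) (-α ∈ Rpos)
  pos_closed : ∀ α ∈ Rpos, ∀ β ∈ Rpos, α + β ∈ R → α + β ∈ Rpos
  irreducible : ∀ S : Finset E, S ⊆ R → S.Nonempty → S ≠ R →
    ∃ α ∈ S, ∃ β ∈ R, β ∉ S ∧ ⟪α, β⟫ ≠ 0

/-- The Weyl group: the subgroup of linear isometries generated by the root reflections. -/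
def weylGroup (R : Finset E) : Subgroup (E ≃ₗᵢ[ℝ] E) :=
  Subgroup.closure (reflAt '' (R : Set E))

/-- A weight: an element with integral pairings against all coroots. -/
def IsWeight (R : Finset E) (x : E) : Prop := ∀ α ∈ R, ∃ k : ℤ, ⟪x, coroot α⟫ = (k : ℝ)

/-- Dominant: nonnegative pairing with all positive roots. -/
def IsDominant (Rpos : Finset E) (x : E) : Prop := ∀ α ∈ Rpos, 0 ≤ ⟪x, α⟫

/-- Dominance order: `μ ≤ λ` iff `λ - μ` is a nonnegative integer combination of positive
roots, i.e. lies in the additive submonoid generated by the positive roots. -/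
def domLE (Rpos : Finset E) (μ lam : E) : Prop :=
  lam - μ ∈ AddSubmonoid.closure (Rpos : Set E)

/-- Strict dominance order. -/
def domLT (Rpos : Finset E) (μ lam : E) : Prop := domLE Rpos μ lam ∧ μ ≠ lam

/-- A small weight: a dominant weight pairing at most `2` with every positive coroot. -/
def IsSmall (R Rpos : Finset E) (ω : E) : Prop :=
  IsDominant Rpos ω ∧ IsWeight R ω ∧ ∀ α ∈ Rpos, ⟪ω, coroot α⟫ ≤ 2

/-- A minuscule weight: a nonzero dominant weight pairing at most `1` with every positive
coroot. -/
def IsMinuscule (R Rpos : Finset E) (ω : E) : Prop :=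
  IsDominant Rpos ω ∧ IsWeight R ω ∧ ω ≠ 0 ∧ ∀ α ∈ Rpos, ⟪ω, coroot α⟫ ≤ 1

/-- The Weyl orbit of a point. -/
def weylOrbit (R : Finset E) (x : E) : Set E := {y | ∃ w ∈ weylGroup R, w x = y}

set_option linter.unusedSectionVars false
set_option linter.unusedVariables false
set_option maxHeartbeats 1000000

-- ## basic lemmas
theorem inner_coroot (x α : E) : ⟪x, coroot α⟫ = 2 / ⟪α, α⟫ * ⟪x, α⟫ := by
  simp [coroot, real_inner_smul_right]

theorem coroot_neg (α : E) : coroot (-α) = -coroot α := by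
  simp [coroot]

theorem inner_self_coroot {α : E} (h : α ≠ 0) : ⟪α, coroot α⟫ = 2 := by
  have h2 : ⟪α, α⟫ ≠ 0 := by
    simpa [inner_self_eq_zero] using h
  rw [inner_coroot]; field_simp

theorem reflAt_apply (α x : E) : reflAt α x = x - ⟪x, coroot α⟫ • α := by
  have h : ((‖α‖ : ℝ)) ^ 2 = ⟪α, α⟫ := (real_inner_self_eq_norm_sq α).symm
  rw [reflAt, Submodule.reflection_orthogonal_apply, Submodule.reflection_singleton_apply]
  simp only [RCLike.ofReal_real_eq_id, id_eq]
  rw [h, inner_coroot, real_inner_comm x α, two_smul]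
  module

theorem reflAt_fix {α x : E} (h : ⟪x, α⟫ = 0) : reflAt α x = x := by
  rw [reflAt_apply, inner_coroot, h]; simp

theorem reflAt_self (α : E) : reflAt α α = -α :=
  Submodule.reflection_orthogonalComplement_singleton_eq_neg α

theorem reflAt_involutive (α : E) (x : E) : reflAt α (reflAt α x) = x :=
  Submodule.reflection_involutive _ x

theorem reflAt_inv (α : E) : (reflAt α)⁻¹ = reflAt α := by
  ext x
  rw [LinearIsometryEquiv.coe_inv, reflAt]
  rw [Submodule.reflection_symm]

theorem map_coroot (w : E ≃ₗᵢ[ℝ] E) (α : E) : coroot (w α) = w (coroot α) := by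
  rw [coroot, coroot, w.inner_map_map α α]  -- check name
  exact (w.map_smul _ _).symm

theorem inner_reflAt (α x y : E) : ⟪reflAt α x, y⟫ = ⟪x, reflAt α y⟫ := by
  conv_lhs => rw [← reflAt_involutive α y]
  exact (reflAt α).inner_map_map x (reflAt α y)

theorem norm_sq_reflAt (α x : E) : ⟪reflAt α x, reflAt α x⟫ = ⟪x, x⟫ :=
  (reflAt α).inner_map_map x x

theorem reflAt_apply' {δ x : E} {c : ℝ} (h : ⟪x, coroot δ⟫ = c) :
    reflAt δ x = x - c • δ := by rw [reflAt_apply, h]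

-- ## root system lemmas
section RS
variable {R Rpos : Finset E} (hRS : IsRootSystem R Rpos)
include hRS

theorem root_inner_self_pos {γ : E} (hγ : γ ∈ R) : 0 < ⟪γ, γ⟫ :=
  lt_of_le_of_ne real_inner_self_nonneg
    (fun h => hRS.ne_zero γ hγ (inner_self_eq_zero.mp h.symm))

theorem neg_mem_root {γ : E} (hγ : γ ∈ R) : -γ ∈ R := by
  have := hRS.refl_mem γ hγ γ hγ
  rwa [reflAt_self] at this

theorem weyl_maps_root : ∀ w ∈ weylGroup R, ∀ γ ∈ R, w γ ∈ R := by
  intro w hw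
  have key : ∀ γ ∈ R, w γ ∈ R ∧ w⁻¹ γ ∈ R := by
    refine Subgroup.closure_induction (k := reflAt '' (R : Set E))
      (p := fun g _ => ∀ γ ∈ R, g γ ∈ R ∧ g⁻¹ γ ∈ R) ?_ ?_ ?_ ?_ hw
    · rintro x ⟨α, hα, rfl⟩ γ hγ
      rw [reflAt_inv]
      exact ⟨hRS.refl_mem α hα γ hγ, hRS.refl_mem α hα γ hγ⟩
    · intro γ hγ
      refine ⟨by simpa using hγ, by simpa using hγ⟩
    · intro x y hx hy px py γ hγ
      constructor
      · have := (px (y γ) (py γ hγ).1).1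
        simpa [LinearIsometryEquiv.coe_mul] using this
      · have := (py (x⁻¹ γ) (px γ hγ).2).2
        rw [mul_inv_rev, LinearIsometryEquiv.coe_mul]
        exact this
    · intro x hx px γ hγ
      exact ⟨(px γ hγ).2, by simpa using (px γ hγ).1⟩
  exact fun γ hγ => (key γ hγ).1

theorem pos_of_inner_pos {x γ : E} (hdom : IsDominant Rpos x) (hγ : γ ∈ R)
    (h : 0 < ⟪x, γ⟫) : γ ∈ Rpos := by
  rcases Xor.or (hRS.pos_split γ hγ) with h1 | h1
  · exact h1
  · have := hdom _ h1
    rw [inner_neg_right] at this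
    linarith

theorem coroot_pair_nonneg_of_pos {x γ : E} (hdom : IsDominant Rpos x) (hγ : γ ∈ Rpos) :
    0 ≤ ⟪x, coroot γ⟫ := by
  rw [inner_coroot]
  have h1 : 0 < ⟪γ, γ⟫ := root_inner_self_pos hRS (hRS.pos_subset hγ)
  have := hdom _ hγ
  positivity

theorem small_pair_bounds {x γ : E} (hx : IsSmall R Rpos x) (hγ : γ ∈ R) :
    -2 ≤ ⟪x, coroot γ⟫ ∧ ⟪x, coroot γ⟫ ≤ 2 := by
  rcases Xor.or (hRS.pos_split γ hγ) with h1 | h1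
  · exact ⟨le_trans (by norm_num) (coroot_pair_nonneg_of_pos hRS hx.1 h1), hx.2.2 γ h1⟩
  · have h2 : ⟪x, coroot (-γ)⟫ = -⟪x, coroot γ⟫ := by rw [coroot_neg, inner_neg_right]
    have h3 := hx.2.2 _ h1
    have h4 := coroot_pair_nonneg_of_pos hRS hx.1 h1
    rw [h2] at h3 h4
    constructor <;> linarith

end RS

-- ## connectivity of the root graph and common neighbors
section CN
variable {R Rpos : Finset E} (hRS : IsRootSystem R Rpos)

/-- adjacency in the non-orthogonality graph of `R` -/
def Adj (R : Finset E) (a b : E) : Prop := b ∈ R ∧ ⟪a, b⟫ ≠ 0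

include hRS

theorem chain_snoc {x a b : E} {l : List E} (h : List.Chain (Adj R) x (l ++ [a]))
    (hab : Adj R a b) : List.Chain (Adj R) x (l ++ [a] ++ [b]) := by
  clear hRS
  induction l generalizing x with
  | nil =>
    rcases h with ⟨_⟩
    · exact List.Chain.cons (by assumption) (List.Chain.cons hab List.Chain.nil)
  | cons d t ih =>
    rcases h with ⟨_⟩
    rename_i h1 h2
    exact List.Chain.cons h1 (ih h2)

theorem path_exists {x y : E} (hx : x ∈ R) (hy : y ∈ R) :
    ∃ l : List E, List.Chain (Adj R) x (l ++ [y]) := by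
  classical
  set S := R.filter (fun z => ∃ l : List E, List.Chain (Adj R) x (l ++ [z])) with hS
  have hxS : x ∈ S := by
    rw [hS, Finset.mem_filter]
    exact ⟨hx, [], List.Chain.cons ⟨hx, ne_of_gt (root_inner_self_pos hRS hx)⟩ List.Chain.nil⟩
  by_cases hSR : S = R
  · have : y ∈ S := hSR ▸ hy
    rw [hS, Finset.mem_filter] at this
    exact this.2
  · exfalso
    obtain ⟨a, haS, b, hbR, hbS, hab⟩ :=
      hRS.irreducible S (Finset.filter_subset _ _) ⟨x, hxS⟩ hSR
    rw [hS, Finset.mem_filter] at haS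
    obtain ⟨haR, l, hl⟩ := haS
    apply hbS
    rw [hS, Finset.mem_filter]
    exact ⟨hbR, l ++ [a], chain_snoc hRS hl ⟨hbR, hab⟩⟩

theorem refl_chain {η y : E} (hη : η ∈ R) (hηy : ⟪η, y⟫ = 0) :
    ∀ (m : List E) (a : E), List.Chain (Adj R) a (m ++ [y]) →
      List.Chain (Adj R) (reflAt η a) ((m.map (reflAt η)) ++ [y]) := by
  intro m
  induction m with
  | nil =>
    intro a h
    rcases h with ⟨_⟩
    rename_i h1 _
    refine List.Chain.cons ⟨h1.1, ?_⟩ List.Chain.nil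
    rw [inner_reflAt, reflAt_fix (by rw [real_inner_comm]; exact hηy)]
    exact h1.2
  | cons b m2 ih =>
    intro a h
    rcases h with ⟨_⟩
    rename_i h1 h2
    exact List.Chain.cons ⟨hRS.refl_mem η hη b h1.1, by
      rw [(reflAt η).inner_map_map]; exact h1.2⟩ (ih b h2)

theorem common_neighbor {x y : E} (hx : x ∈ R) (hy : y ∈ R) (hxy : ⟪x, y⟫ = 0) :
    ∃ γ ∈ R, ⟪γ, x⟫ ≠ 0 ∧ ⟪γ, y⟫ ≠ 0 := by
  obtain ⟨l, hl⟩ := path_exists hRS hx hy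
  have aux : ∀ n : ℕ, ∀ l : List E, l.length ≤ n →
      List.Chain (Adj R) x (l ++ [y]) → ∃ γ ∈ R, ⟪γ, x⟫ ≠ 0 ∧ ⟪γ, y⟫ ≠ 0 := by
    intro n
    induction n with
    | zero =>
      intro l hlen hchain
      have hl0 : l = [] := List.length_eq_zero_iff.mp (Nat.le_zero.mp hlen)
      subst hl0
      rcases hchain with ⟨_⟩
      rename_i h1 _
      exact absurd hxy h1.2
    | succ n ih =>
      intro l hlen hchain
      match l with
      | [] =>
        rcases hchain with ⟨_⟩
        rename_i h1 _
        exact absurd hxy h1.2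
      | η :: t =>
        rcases hchain with ⟨_⟩
        rename_i h1 h2
        by_cases hny : ⟪η, y⟫ ≠ 0
        · exact ⟨η, h1.1, by rw [real_inner_comm]; exact h1.2, hny⟩
        · push_neg at hny
          match t with
          | [] =>
            rcases h2 with ⟨_⟩
            rename_i h3 _
            exact absurd hny h3.2
          | η2 :: t2 =>
            rcases h2 with ⟨_⟩
            rename_i h3 h4
            by_cases hx2 : ⟪x, η2⟫ ≠ 0
            · refine ih (η2 :: t2) (by simp at hlen ⊢; omega) ?_
              exact List.Chain.cons ⟨h3.1, hx2⟩ h4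
            · push_neg at hx2
              refine ih ((reflAt η η2) :: (t2.map (reflAt η)))
                (by simp at hlen ⊢; omega) ?_
              refine List.Chain.cons ⟨hRS.refl_mem η h1.1 η2 h3.1, ?_⟩
                (refl_chain hRS h1.1 hny t2 η2 h4)
              rw [reflAt_apply, inner_sub_right, hx2, zero_sub, real_inner_smul_right]
              have hη2η : ⟪η2, coroot η⟫ ≠ 0 := by
                rw [inner_coroot]
                have hηη : 0 < ⟪η, η⟫ := root_inner_self_pos hRS h1.1
                have : ⟪η2, η⟫ ≠ 0 := by rw [real_inner_comm]; exact h3.2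
                positivity
              simp only [neg_ne_zero]
              exact mul_ne_zero hη2η h1.2
  exact aux l.length l le_rfl hl

end CN

-- ## the stabilizer-connectivity relation
def Conn (R : Finset E) (μa μb δ ζ : E) : Prop :=
  ∃ w ∈ weylGroup R, w μa = μa ∧ w μb = μb ∧ w δ = ζ

/-- positive roots orthogonal to `μa`, pairing `2` with `μb`, same length as `β` -/
def InT (Rpos : Finset E) (μa μb β δ : E) : Prop :=
  δ ∈ Rpos ∧ ⟪μa, δ⟫ = 0 ∧ ⟪μb, coroot δ⟫ = 2 ∧ ⟪δ, δ⟫ = ⟪β, β⟫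

section Conn
variable {R Rpos : Finset E} {μa μb β : E}

theorem conn_refl (δ : E) : Conn R μa μb δ δ :=
  ⟨1, one_mem _, rfl, rfl, rfl⟩

theorem conn_symm {δ ζ : E} (h : Conn R μa μb δ ζ) : Conn R μa μb ζ δ := by
  obtain ⟨w, hw, h1, h2, h3⟩ := h
  refine ⟨w⁻¹, inv_mem hw, ?_, ?_, ?_⟩
  · conv_lhs => rw [← h1]
    simp [LinearIsometryEquiv.coe_inv]
  · conv_lhs => rw [← h2]
    simp [LinearIsometryEquiv.coe_inv]
  · conv_lhs => rw [← h3]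
    simp [LinearIsometryEquiv.coe_inv]

theorem conn_trans {δ ζ ξ : E} (h : Conn R μa μb δ ζ) (h' : Conn R μa μb ζ ξ) :
    Conn R μa μb δ ξ := by
  obtain ⟨w, hw, h1, h2, h3⟩ := h
  obtain ⟨w', hw', h1', h2', h3'⟩ := h'
  refine ⟨w' * w, mul_mem hw' hw, ?_, ?_, ?_⟩ <;>
    simp [LinearIsometryEquiv.coe_mul, Function.comp, h1, h2, h3, h1', h2', h3']

theorem reflAt_mem_weyl {γ : E} (hγ : γ ∈ R) : reflAt γ ∈ weylGroup R :=
  Subgroup.subset_closure ⟨γ, by simpa using hγ, rfl⟩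

theorem conn_reflAt {γ δ : E} (hγ : γ ∈ R) (h1 : ⟪μa, γ⟫ = 0) (h2 : ⟪μb, γ⟫ = 0) :
    Conn R μa μb δ (reflAt γ δ) :=
  ⟨reflAt γ, reflAt_mem_weyl hγ, reflAt_fix h1, reflAt_fix h2, rfl⟩

variable (hRS : IsRootSystem R Rpos) (ha : IsSmall R Rpos μa) (hb : IsSmall R Rpos μb)
  (hβ : β ∈ Rpos)
include hRS hβ

theorem lsq_pos : 0 < ⟪β, β⟫ := root_inner_self_pos hRS (hRS.pos_subset hβ)

theorem InT.mem_R {δ : E} (h : InT Rpos μa μb β δ) : δ ∈ R := hRS.pos_subset h.1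

theorem InT.lsq {δ : E} (h : InT Rpos μa μb β δ) : ⟪δ, δ⟫ = ⟪β, β⟫ := h.2.2.2

theorem InT.inner_mub {δ : E} (h : InT Rpos μa μb β δ) : ⟪μb, δ⟫ = ⟪β, β⟫ := by
  have h1 := h.2.2.1
  rw [inner_coroot] at h1
  have h2 : ⟪δ, δ⟫ ≠ 0 := by rw [h.lsq hRS hβ]; exact (lsq_pos hRS hβ).ne'
  field_simp at h1
  rw [h1, h.lsq hRS hβ]

/-- pairing `2` means equality -/
theorem InT.eq_of_two {δ ζ : E} (hδ : InT Rpos μa μb β δ) (hζ : InT Rpos μa μb β ζ)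
    (hp : ⟪ζ, coroot δ⟫ = 2) : ζ = δ := by
  have hδδ : ⟪δ, δ⟫ = ⟪β, β⟫ := hδ.lsq hRS hβ
  have hζζ : ⟪ζ, ζ⟫ = ⟪β, β⟫ := hζ.lsq hRS hβ
  have hne : ⟪δ, δ⟫ ≠ 0 := by rw [hδδ]; exact (lsq_pos hRS hβ).ne'
  have hp2 := hp
  rw [inner_coroot, hδδ] at hp2
  have hp' : ⟪ζ, δ⟫ = ⟪β, β⟫ := by
    have := lsq_pos hRS hβ
    field_simp at hp2
    linarith
  have : ⟪ζ - δ, ζ - δ⟫ = 0 := by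
    rw [inner_sub_sub_self, real_inner_comm ζ δ, hδδ, hζζ, hp']; ring
  rw [inner_self_eq_zero, sub_eq_zero] at this
  exact this

theorem InT.not_neg_two {δ ζ : E} (hδ : InT Rpos μa μb β δ) (hζ : InT Rpos μa μb β ζ)
    (hp : ⟪ζ, coroot δ⟫ = -2) : False := by
  have hδδ : ⟪δ, δ⟫ = ⟪β, β⟫ := hδ.lsq hRS hβ
  have hζζ : ⟪ζ, ζ⟫ = ⟪β, β⟫ := hζ.lsq hRS hβ
  have hne : ⟪δ, δ⟫ ≠ 0 := by rw [hδδ]; exact (lsq_pos hRS hβ).ne'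
  have hp2 := hp
  rw [inner_coroot, hδδ] at hp2
  have hL := lsq_pos hRS hβ
  have hp' : ⟪ζ, δ⟫ = -⟪β, β⟫ := by
    field_simp at hp2
    linarith
  have : ⟪ζ + δ, ζ + δ⟫ = 0 := by
    rw [inner_add_add_self, hδδ, hζζ, real_inner_comm ζ δ, hp']; ring
  rw [inner_self_eq_zero] at this
  have h1 : ζ = -δ := by linear_combination (norm := module) this
  have h2 := hζ.inner_mub hRS hβ
  have h3 := hδ.inner_mub hRS hβ
  rw [h1, inner_neg_right, h3] at h2
  have := lsq_pos hRS hβ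
  linarith

/-- pairing `1` gives a connecting reflection -/
theorem InT.conn_of_one {δ ζ : E} (hδ : InT Rpos μa μb β δ) (hζ : InT Rpos μa μb β ζ)
    (hp : ⟪ζ, coroot δ⟫ = 1) : Conn R μa μb δ ζ := by
  have hδδ : ⟪δ, δ⟫ = ⟪β, β⟫ := hδ.lsq hRS hβ
  have hζζ : ⟪ζ, ζ⟫ = ⟪β, β⟫ := hζ.lsq hRS hβ
  have hL := lsq_pos hRS hβ
  have hne : ⟪δ, δ⟫ ≠ 0 := by rw [hδδ]; exact hL.ne'
  have hp2 := hp
  rw [inner_coroot, hδδ] at hp2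
  have hp' : ⟪ζ, δ⟫ = ⟪β, β⟫ / 2 := by
    field_simp at hp2
    linarith
  -- the difference is a root
  have hγR : ζ - δ ∈ R := by
    have := hRS.refl_mem δ (hδ.mem_R hRS hβ) ζ (hζ.mem_R hRS hβ)
    rwa [reflAt_apply' hp, one_smul] at this
  have hγγ : ⟪ζ - δ, ζ - δ⟫ = ⟪β, β⟫ := by
    rw [inner_sub_sub_self, real_inner_comm ζ δ, hδδ, hζζ, hp']; ring
  have hw := conn_reflAt (μa := μa) (μb := μb) (δ := δ) hγR ?_ ?_
  · obtain ⟨w, hwW, h1, h2, h3⟩ := hw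
    refine ⟨w, hwW, h1, h2, ?_⟩
    have hδγ : ⟪δ, coroot (ζ - δ)⟫ = -1 := by
      rw [inner_coroot, hγγ, inner_sub_right, real_inner_comm ζ δ, hp', hδδ]
      field_simp
      ring
    rw [h3, reflAt_apply' hδγ]
    module
  · rw [inner_sub_right, hδ.2.1, hζ.2.1, sub_zero]
  · rw [inner_sub_right, hδ.inner_mub hRS hβ, hζ.inner_mub hRS hβ, sub_self]

include hb in
/-- pairing `-1` contradicts smallness of `μb` -/
theorem InT.not_neg_one {δ ζ : E} (hδ : InT Rpos μa μb β δ) (hζ : InT Rpos μa μb β ζ)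
    (hp : ⟪ζ, coroot δ⟫ = -1) : False := by
  have hδδ : ⟪δ, δ⟫ = ⟪β, β⟫ := hδ.lsq hRS hβ
  have hζζ : ⟪ζ, ζ⟫ = ⟪β, β⟫ := hζ.lsq hRS hβ
  have hL := lsq_pos hRS hβ
  have hne : ⟪δ, δ⟫ ≠ 0 := by rw [hδδ]; exact hL.ne'
  have hp2 := hp
  rw [inner_coroot, hδδ] at hp2
  have hp' : ⟪ζ, δ⟫ = -(⟪β, β⟫ / 2) := by
    field_simp at hp2
    linarith
  have hξR : ζ + δ ∈ R := by
    have := hRS.refl_mem δ (hδ.mem_R hRS hβ) ζ (hζ.mem_R hRS hβ)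
    rwa [reflAt_apply' hp, neg_one_smul, sub_neg_eq_add] at this
  have hξξ : ⟪ζ + δ, ζ + δ⟫ = ⟪β, β⟫ := by
    rw [inner_add_add_self, hδδ, hζζ, real_inner_comm ζ δ, hp']; ring
  have hpair : ⟪μb, coroot (ζ + δ)⟫ = 4 := by
    rw [inner_coroot, hξξ, inner_add_right, hδ.inner_mub hRS hβ, hζ.inner_mub hRS hβ]
    field_simp; ring
  have := (small_pair_bounds hRS hb hξR).2
  rw [hpair] at this
  norm_num at this

/-- pairings between elements of `T` are integers in `[-2,2]` -/
theorem InT.pairing_bounds {δ ζ : E} (hδ : InT Rpos μa μb β δ) (hζ : InT Rpos μa μb β ζ) :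
    ∃ k : ℤ, ⟪ζ, coroot δ⟫ = (k : ℝ) ∧ -2 ≤ k ∧ k ≤ 2 := by
  obtain ⟨k, hk⟩ := hRS.cryst δ (hδ.mem_R hRS hβ) ζ (hζ.mem_R hRS hβ)
  refine ⟨k, hk, ?_⟩
  have hδδ : ⟪δ, δ⟫ = ⟪β, β⟫ := hδ.lsq hRS hβ
  have hζζ : ⟪ζ, ζ⟫ = ⟪β, β⟫ := hζ.lsq hRS hβ
  have hL := lsq_pos hRS hβ
  have hCS := abs_real_inner_le_norm ζ δ
  have hnζ : ‖ζ‖ = Real.sqrt ⟪β, β⟫ := by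
    rw [← hζζ, real_inner_self_eq_norm_sq, Real.sqrt_sq (norm_nonneg _)]
  have hnδ : ‖δ‖ = Real.sqrt ⟪β, β⟫ := by
    rw [← hδδ, real_inner_self_eq_norm_sq, Real.sqrt_sq (norm_nonneg _)]
  rw [hnζ, hnδ, Real.mul_self_sqrt hL.le] at hCS
  rw [inner_coroot, hδδ] at hk
  have h1 : ⟪ζ, δ⟫ = (k : ℝ) * ⟪β, β⟫ / 2 := by
    field_simp at hk; linarith
  rw [h1, abs_div, abs_mul, abs_of_pos hL, abs_two] at hCS
  have h2 : |(k : ℝ)| ≤ 2 := by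
    rw [div_le_iff₀ (by norm_num)] at hCS
    nlinarith [hCS, hL]
  have h3 : |k| ≤ 2 := by exact_mod_cast h2
  rw [abs_le] at h3
  exact h3

end Conn

-- ## the orthogonal case
section Orth
variable {R Rpos : Finset E} {μa μb β : E}
variable (hRS : IsRootSystem R Rpos) (ha : IsSmall R Rpos μa) (hb : IsSmall R Rpos μb)
  (hβ : β ∈ Rpos)

theorem coroot_pair_reflAt {x δ' : E} (y : E) {c : ℝ} (h2 : ⟪x, coroot δ'⟫ = c) :
    ⟪x, coroot (reflAt δ' y)⟫ = ⟪x, coroot y⟫ - c * ⟪δ', coroot y⟫ := by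
  rw [map_coroot, ← inner_reflAt, reflAt_apply' h2, inner_sub_left, real_inner_smul_left]

include hRS hb in
theorem pos_of_coroot_pos {ξ : E} (hξ : ξ ∈ R) (h : 0 < ⟪μb, coroot ξ⟫) : ξ ∈ Rpos := by
  refine pos_of_inner_pos hRS hb.1 hξ ?_
  rw [inner_coroot] at h
  have hg := root_inner_self_pos hRS hξ
  have h2 : 0 < 2 / ⟪ξ, ξ⟫ := by positivity
  by_contra hle
  push_neg at hle
  nlinarith [mul_nonpos_of_nonneg_of_nonpos h2.le hle]

include hRS hb in
theorem neg_pos_of_coroot_neg {ξ : E} (hξ : ξ ∈ R) (h : ⟪μb, coroot ξ⟫ < 0) : -ξ ∈ Rpos := by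
  refine pos_of_inner_pos hRS hb.1 (neg_mem_root hRS hξ) ?_
  rw [inner_coroot] at h
  have hg := root_inner_self_pos hRS hξ
  rw [inner_neg_right]
  have h2 : 0 < 2 / ⟪ξ, ξ⟫ := by positivity
  by_contra hle
  push_neg at hle
  nlinarith [mul_nonneg h2.le (by linarith : (0:ℝ) ≤ ⟪μb, ξ⟫)]

include hRS ha hb hβ in
theorem InT.conn_aux {δ ζ γ : E} (hδ : InT Rpos μa μb β δ) (hζ : InT Rpos μa μb β ζ)
    (horth : ⟪ζ, δ⟫ = 0) (hγR : γ ∈ R) (hδγpos : 0 < ⟪δ, γ⟫) (hζγ : ⟪ζ, γ⟫ ≠ 0) :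
    Conn R μa μb δ ζ := by
  have hδR : δ ∈ R := hδ.mem_R hRS hβ
  have hζR : ζ ∈ R := hζ.mem_R hRS hβ
  have hL : 0 < ⟪β, β⟫ := lsq_pos hRS hβ
  set L := ⟪β, β⟫ with hLdef
  have hδδ : ⟪δ, δ⟫ = L := hδ.lsq hRS hβ
  have hζζ : ⟪ζ, ζ⟫ = L := hζ.lsq hRS hβ
  have hg : 0 < ⟪γ, γ⟫ := root_inner_self_pos hRS hγR
  set g := ⟪γ, γ⟫ with hgdef
  -- the three reflected roots
  have hγ1R : reflAt δ γ ∈ R := hRS.refl_mem δ hδR γ hγR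
  have hγ2R : reflAt ζ γ ∈ R := hRS.refl_mem ζ hζR γ hγR
  have hγ3R : reflAt ζ (reflAt δ γ) ∈ R := hRS.refl_mem ζ hζR _ hγ1R
  -- integer pairings
  obtain ⟨ku', hu'⟩ := hRS.cryst γ hγR δ hδR      -- ⟪δ, coroot γ⟫
  obtain ⟨kv', hv'⟩ := hRS.cryst γ hγR ζ hζR      -- ⟪ζ, coroot γ⟫
  obtain ⟨kq, hq⟩ := hb.2.1 γ hγR                  -- ⟪μb, coroot γ⟫
  obtain ⟨kp, hp⟩ := ha.2.1 γ hγR                  -- ⟪μa, coroot γ⟫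
  obtain ⟨ku, hu⟩ := hRS.cryst δ hδR γ hγR        -- ⟪γ, coroot δ⟫
  have hδcorζ : ⟪δ, coroot ζ⟫ = 0 := by
    rw [inner_coroot, real_inner_comm ζ δ, horth, mul_zero]
  have hζcorδ : ⟪ζ, coroot δ⟫ = 0 := by
    rw [inner_coroot, horth, mul_zero]
  -- pairing values on reflected roots
  have hq1 : ⟪μb, coroot (reflAt δ γ)⟫ = ((kq - 2 * ku' : ℤ) : ℝ) := by
    rw [coroot_pair_reflAt γ hδ.2.2.1, hq, hu']; push_cast; ring
  have hq2 : ⟪μb, coroot (reflAt ζ γ)⟫ = ((kq - 2 * kv' : ℤ) : ℝ) := by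
    rw [coroot_pair_reflAt γ hζ.2.2.1, hq, hv']; push_cast; ring
  have hζγ1 : ⟪ζ, coroot (reflAt δ γ)⟫ = (kv' : ℝ) := by
    rw [coroot_pair_reflAt γ hζcorδ, hv', zero_mul, sub_zero]
  have hq3 : ⟪μb, coroot (reflAt ζ (reflAt δ γ))⟫ = ((kq - 2 * ku' - 2 * kv' : ℤ) : ℝ) := by
    rw [coroot_pair_reflAt _ hζ.2.2.1, hq1, hζγ1]; push_cast; ring
  have hμaδ0 : ⟪μa, coroot δ⟫ = 0 := by
    rw [inner_coroot, hδ.2.1, mul_zero]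
  have hμaζ0 : ⟪μa, coroot ζ⟫ = 0 := by
    rw [inner_coroot, hζ.2.1, mul_zero]
  have hp1 : ⟪μa, coroot (reflAt δ γ)⟫ = (kp : ℝ) := by
    rw [coroot_pair_reflAt γ hμaδ0, hp, zero_mul, sub_zero]
  have hp2 : ⟪μa, coroot (reflAt ζ γ)⟫ = (kp : ℝ) := by
    rw [coroot_pair_reflAt γ hμaζ0, hp, zero_mul, sub_zero]
  have hp3 : ⟪μa, coroot (reflAt ζ (reflAt δ γ))⟫ = (kp : ℝ) := by
    rw [coroot_pair_reflAt _ hμaζ0, hp1, zero_mul, sub_zero]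
  -- integer bounds
  have bnd : ∀ ξ ∈ R, ∀ k : ℤ, ⟪μb, coroot ξ⟫ = (k : ℝ) → -2 ≤ k ∧ k ≤ 2 := by
    intro ξ hξ k hk
    have := small_pair_bounds hRS hb hξ
    rw [hk] at this
    exact_mod_cast this
  have b0 := bnd γ hγR kq hq
  have b1 := bnd _ hγ1R _ hq1
  have b2 := bnd _ hγ2R _ hq2
  have b3 := bnd _ hγ3R _ hq3
  -- ku' ≥ 1 and kv' ≠ 0
  have hku'pos : 1 ≤ ku' := by
    have : (0 : ℝ) < (ku' : ℝ) := by
      rw [← hu', inner_coroot]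
      have : 0 < ⟪δ, γ⟫ := hδγpos
      positivity
    have h0 : (0:ℤ) < ku' := by exact_mod_cast this
    omega
  have hkv'ne : kv' ≠ 0 := by
    intro h0
    rw [h0] at hv'
    rw [inner_coroot] at hv'
    simp only [Int.cast_zero] at hv'
    have : ⟪ζ, γ⟫ = 0 := by
      rcases mul_eq_zero.mp hv' with h | h
      · exfalso; revert h; positivity
      · exact h
    exact hζγ this
  -- the two possible patterns
  have main : ku' = 1 ∧ ((kv' = 1 ∧ kq = 2) ∨ (kv' = -1 ∧ kq = 0)) := by omega
  obtain ⟨hku', hcase⟩ := main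
  -- relation between ku and g : ⟪δ,γ⟫ = g/2 and (ku:ℝ) * L = g
  have hδγval : ⟪δ, γ⟫ = g / 2 := by
    have := hu'
    rw [hku'] at this
    rw [inner_coroot] at this
    simp only [Int.cast_one] at this
    field_simp at this
    rw [div_eq_iff hg.ne'] at this; linarith
  have hkuval : (ku : ℝ) * L = g := by
    have := hu
    rw [inner_coroot, hδδ, real_inner_comm δ γ, hδγval] at this
    field_simp at this
    linarith
  have hku_bounds : 1 ≤ ku ∧ ku ≤ 4 := by
    have hCS := real_inner_mul_inner_self_le δ γ
    rw [hδγval, hδδ, ← hgdef] at hCS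
    constructor
    · have : (0 : ℝ) < (ku : ℝ) := by
        rw [show ((ku : ℝ)) = g / L by rw [eq_div_iff hL.ne']; exact hkuval]
        positivity
      have h0 : (0:ℤ) < ku := by exact_mod_cast this
      omega
    · have hgle : g ≤ 4 * L := by
        by_contra hgt
        push_neg at hgt
        nlinarith [mul_lt_mul_of_pos_right hgt hg]
      have : (ku : ℝ) ≤ 4 := by
        have := (mul_le_mul_iff_of_pos_right hL).mp (by linarith : (ku : ℝ) * L ≤ 4 * L)
        exact this
      exact_mod_cast this
  -- dispose of ku = 4 : forces γ = 2δ, contradicting ⟪ζ,γ⟫ ≠ 0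
  have hku4 : ku ≠ 4 := by
    intro h4
    have hg4 : g = 4 * L := by rw [← hkuval, h4]; norm_num
    have : ⟪γ - (2:ℝ) • δ, γ - (2:ℝ) • δ⟫ = 0 := by
      have e1 : ⟪γ, (2:ℝ) • δ⟫ = g := by
        rw [real_inner_smul_right, real_inner_comm δ γ, hδγval]; ring
      have e2 : ⟪(2:ℝ) • δ, γ⟫ = g := by
        rw [real_inner_smul_left, hδγval]; ring
      have e3 : ⟪(2:ℝ) • δ, (2:ℝ) • δ⟫ = 4 * L := by
        rw [real_inner_smul_left, real_inner_smul_right, hδδ]; ring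
      rw [inner_sub_sub_self, e1, e2, e3, ← hgdef, hg4]
      ring
    rw [inner_self_eq_zero, sub_eq_zero] at this
    apply hζγ
    rw [this, real_inner_smul_right, horth, mul_zero]
  -- case split
  rcases hcase with ⟨hkv, hkq⟩ | ⟨hkv, hkq⟩
  -- ############ CASE A : kv' = 1, kq = 2
  · -- γ is a positive root with p = 0
    have hγpos : γ ∈ Rpos := by
      apply pos_of_coroot_pos hRS hb hγR
      rw [hq, hkq]; norm_num
    have hppos : (0:ℝ) ≤ (kp : ℝ) := by
      rw [← hp]
      exact coroot_pair_nonneg_of_pos hRS ha.1 hγpos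
    have hpneg : (kp : ℝ) ≤ 0 := by
      have hneg : -(reflAt ζ (reflAt δ γ)) ∈ Rpos := by
        apply neg_pos_of_coroot_neg hRS hb hγ3R
        rw [hq3, hkq, hku', hkv]; norm_num
      have := coroot_pair_nonneg_of_pos hRS ha.1 hneg
      rw [coroot_neg, inner_neg_right, hp3] at this
      linarith
    have hkp0 : (kp : ℝ) = 0 := le_antisymm hpneg hppos
    have hμaγ : ⟪μa, γ⟫ = 0 := by
      have := hp
      rw [hkp0, inner_coroot] at this
      rcases mul_eq_zero.mp this with h | h
      · exfalso; revert h; positivity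
      · exact h
    -- useful values
    have hμbγ : ⟪μb, γ⟫ = g := by
      have := hq
      rw [hkq, inner_coroot] at this
      push_cast at this
      field_simp at this
      rw [div_eq_iff hg.ne'] at this; linarith
    have hμbδ : ⟪μb, δ⟫ = L := hδ.inner_mub hRS hβ
    have hζγval : ⟪ζ, γ⟫ = g / 2 := by
      have := hv'
      rw [hkv, inner_coroot] at this
      simp only [Int.cast_one] at this
      field_simp at this
      rw [div_eq_iff hg.ne'] at this; linarith
    obtain ⟨hkulb, hkuub⟩ := hku_bounds
    interval_cases ku
    · -- ku = 1 : γ ∈ T and connects to both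
      have hgL : g = L := by rw [← hkuval]; norm_num
      have hγT : InT Rpos μa μb β γ :=
        ⟨hγpos, hμaγ, by rw [hq, hkq]; norm_num, by rw [← hgdef, hgL]⟩
      have c1 : Conn R μa μb δ γ := hδ.conn_of_one hRS hβ hγT (by
        rw [hu]; norm_num)
      have c2 : Conn R μa μb γ ζ := hγT.conn_of_one hRS hβ hζ (by
        rw [inner_coroot, ← hgdef, hgL, hζγval, hgL]; field_simp)
      exact conn_trans c1 c2
    · -- ku = 2 : ζ = γ - δ and ζ - δ is an orthogonal root
      have hgL : g = 2 * L := by rw [← hkuval]; norm_num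
      -- γ - δ ∈ R
      have hδcorγ : ⟪δ, coroot γ⟫ = 1 := by rw [hu', hku']; norm_num
      have hηR : γ - δ ∈ R := by
        have := hRS.refl_mem γ hγR δ hδR
        rw [reflAt_apply' hδcorγ, one_smul] at this
        have := neg_mem_root hRS this
        rwa [neg_sub] at this
      have hημb : ⟪μb, γ - δ⟫ = L := by
        rw [inner_sub_right, hμbγ, hμbδ, hgL]; ring
      have hηη : ⟪γ - δ, γ - δ⟫ = L := by
        rw [inner_sub_sub_self, real_inner_comm δ γ, hδγval, ← hgdef, hδδ]; ring
      have hημbcor : ⟪μb, coroot (γ - δ)⟫ = 2 := by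
        rw [inner_coroot, hηη, hημb]; field_simp
      have hηT : InT Rpos μa μb β (γ - δ) :=
        ⟨pos_of_coroot_pos hRS hb hηR (by rw [hημbcor]; norm_num),
          by rw [inner_sub_right, hμaγ, hδ.2.1, sub_zero],
          hημbcor, hηη⟩
      have hηζ : ⟪γ - δ, coroot ζ⟫ = 2 := by
        rw [inner_sub_left, hδcorζ, inner_coroot, hζζ, real_inner_comm ζ γ, hζγval, hgL]
        field_simp
        try ring
      have hζeq : γ - δ = ζ := hζ.eq_of_two hRS hβ hηT hηζ
      -- now ζ - δ = γ - 2δ ∈ R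
      have hupair : ⟪γ, coroot δ⟫ = 2 := by rw [hu]; norm_num
      have hξR : ζ - δ ∈ R := by
        have := hRS.refl_mem δ hδR γ hγR
        rw [reflAt_apply' hupair] at this
        have h2 : γ - (2:ℝ) • δ = ζ - δ := by
          rw [← hζeq]; module
        rwa [h2] at this
      have hξμa : ⟪μa, ζ - δ⟫ = 0 := by
        rw [inner_sub_right, hζ.2.1, hδ.2.1, sub_zero]
      have hξμb : ⟪μb, ζ - δ⟫ = 0 := by
        rw [inner_sub_right, hζ.inner_mub hRS hβ, hμbδ, sub_self]
      have hconn := conn_reflAt (μa := μa) (μb := μb) (δ := δ) hξR hξμa hξμb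
      have hξξ : ⟪ζ - δ, ζ - δ⟫ = 2 * L := by
        rw [inner_sub_sub_self, real_inner_comm ζ δ, horth, hδδ, hζζ]; ring
      have hδξ : ⟪δ, coroot (ζ - δ)⟫ = -1 := by
        rw [inner_coroot, hξξ, inner_sub_right, real_inner_comm ζ δ, horth, hδδ]
        field_simp; ring
      have : reflAt (ζ - δ) δ = ζ := by
        rw [reflAt_apply' hδξ]; module
      rwa [this] at hconn
    · -- ku = 3 : contradiction with smallness
      exfalso
      have hgL : g = 3 * L := by rw [← hkuval]; norm_num
      have hδcorγ : ⟪δ, coroot γ⟫ = 1 := by rw [hu', hku']; norm_num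
      have hηR : γ - δ ∈ R := by
        have := hRS.refl_mem γ hγR δ hδR
        rw [reflAt_apply' hδcorγ, one_smul] at this
        have := neg_mem_root hRS this
        rwa [neg_sub] at this
      have hηη : ⟪γ - δ, γ - δ⟫ = L := by
        rw [inner_sub_sub_self, real_inner_comm δ γ, hδγval, ← hgdef, hδδ]; ring
      have hημb : ⟪μb, γ - δ⟫ = 2 * L := by
        rw [inner_sub_right, hμbγ, hμbδ, hgL]; ring
      have h4 : ⟪μb, coroot (γ - δ)⟫ = 4 := by
        rw [inner_coroot, hηη, hημb]
        field_simp
        try ring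
      have hbd := (small_pair_bounds hRS hb hηR).2
      rw [h4] at hbd
      linarith
    · exact absurd rfl hku4
  -- ############ CASE B : kv' = -1, kq = 0
  · have hppos : (0:ℝ) ≤ (kp : ℝ) := by
      have hpos2 : reflAt ζ γ ∈ Rpos := by
        apply pos_of_coroot_pos hRS hb hγ2R
        rw [hq2, hkq, hkv]; norm_num
      have := coroot_pair_nonneg_of_pos hRS ha.1 hpos2
      rw [hp2] at this
      linarith
    have hpneg : (kp : ℝ) ≤ 0 := by
      have hneg : -(reflAt δ γ) ∈ Rpos := by
        apply neg_pos_of_coroot_neg hRS hb hγ1R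
        rw [hq1, hkq, hku']; norm_num
      have := coroot_pair_nonneg_of_pos hRS ha.1 hneg
      rw [coroot_neg, inner_neg_right, hp1] at this
      linarith
    have hkp0 : (kp : ℝ) = 0 := le_antisymm hpneg hppos
    have hμaγ : ⟪μa, γ⟫ = 0 := by
      have := hp
      rw [hkp0, inner_coroot] at this
      rcases mul_eq_zero.mp this with h | h
      · exfalso; revert h; positivity
      · exact h
    have hμbγ : ⟪μb, γ⟫ = 0 := by
      have := hq
      rw [hkq, inner_coroot] at this
      simp only [Int.cast_zero] at this
      rcases mul_eq_zero.mp this with h | h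
      · exfalso; revert h; positivity
      · exact h
    have hζγval : ⟪ζ, γ⟫ = -(g / 2) := by
      have := hv'
      rw [hkv, inner_coroot] at this
      push_cast at this
      field_simp at this
      rw [div_eq_iff hg.ne'] at this; linarith
    -- η := δ - γ = reflAt γ δ
    have hδcorγ : ⟪δ, coroot γ⟫ = 1 := by rw [hu', hku']; norm_num
    have hηrefl : reflAt γ δ = δ - γ := by
      rw [reflAt_apply' hδcorγ, one_smul]
    have hηR : δ - γ ∈ R := by
      have := hRS.refl_mem γ hγR δ hδR
      rwa [hηrefl] at this
    have hηη : ⟪δ - γ, δ - γ⟫ = L := by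
      rw [inner_sub_sub_self, real_inner_comm δ γ, hδγval, hδδ, ← hgdef]
      ring
    have hημb : ⟪μb, δ - γ⟫ = L := by
      rw [inner_sub_right, hδ.inner_mub hRS hβ, hμbγ, sub_zero]
    have hημbcor : ⟪μb, coroot (δ - γ)⟫ = 2 := by
      rw [inner_coroot, hηη, hημb]; field_simp
    have hηT : InT Rpos μa μb β (δ - γ) :=
      ⟨pos_of_coroot_pos hRS hb hηR (by rw [hημbcor]; norm_num),
        by rw [inner_sub_right, hμaγ, hδ.2.1, sub_zero],
        hημbcor, hηη⟩
    -- Conn δ (δ - γ) via the reflection in γ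
    have hconnδη : Conn R μa μb δ (δ - γ) := by
      have := conn_reflAt (μa := μa) (μb := μb) (δ := δ) hγR hμaγ hμbγ
      rwa [hηrefl] at this
    -- pairing of η with ζ equals ku
    have hηζ : ⟪δ - γ, coroot ζ⟫ = (ku : ℝ) := by
      rw [inner_sub_left, hδcorζ, inner_coroot, hζζ, real_inner_comm ζ γ, hζγval]
      rw [show (0:ℝ) - 2 / L * -(g/2) = g / L by ring, ← hkuval]
      field_simp
    obtain ⟨hkulb, hkuub⟩ := hku_bounds
    interval_cases ku
    · -- ku = 1
      have c2 : Conn R μa μb (δ - γ) ζ := hηT.conn_of_one hRS hβ hζ (by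
        rw [inner_coroot, hηη, real_inner_comm (δ - γ) ζ]
        have : ⟪δ - γ, ζ⟫ = L / 2 := by
          have := hηζ
          rw [inner_coroot, hζζ] at this
          push_cast at this
          field_simp at this
          linarith
        rw [this]; field_simp)
      exact conn_trans hconnδη c2
    · -- ku = 2 : δ - γ = ζ directly
      have : δ - γ = ζ := hζ.eq_of_two hRS hβ hηT (by rw [hηζ]; norm_num)
      rwa [this] at hconnδη
    · -- ku = 3 : contradiction with pairing bounds in T
      exfalso
      obtain ⟨k, hk, hkb1, hkb2⟩ := hζ.pairing_bounds hRS hβ hηT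
      rw [hηζ] at hk
      have : (3:ℤ) = k := by exact_mod_cast hk
      omega
    · exact absurd rfl hku4

end Orth

-- ## assembling the connectivity theorem
section Final
variable {R Rpos : Finset E} {μa μb β : E}
variable (hRS : IsRootSystem R Rpos) (ha : IsSmall R Rpos μa) (hb : IsSmall R Rpos μb)
  (hβ : β ∈ Rpos)

include hRS ha hb hβ in
theorem InT.conn_of_orth {δ ζ : E} (hδ : InT Rpos μa μb β δ) (hζ : InT Rpos μa μb β ζ)
    (horth : ⟪ζ, δ⟫ = 0) : Conn R μa μb δ ζ := by
  obtain ⟨γ, hγR, hγδ, hγζ⟩ :=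
    common_neighbor hRS (hδ.mem_R hRS hβ) (hζ.mem_R hRS hβ)
      (by rw [← real_inner_comm δ ζ]; exact horth)
  have hδγ : ⟪δ, γ⟫ ≠ 0 := by rwa [real_inner_comm δ γ] at hγδ
  have hζγ : ⟪ζ, γ⟫ ≠ 0 := by rwa [real_inner_comm ζ γ] at hγζ
  rcases lt_or_gt_of_ne hδγ with hneg | hpos
  · have hγ'R : -γ ∈ R := neg_mem_root hRS hγR
    refine hδ.conn_aux hRS ha hb hβ hζ horth hγ'R ?_ ?_
    · rw [inner_neg_right]; linarith
    · rw [inner_neg_right]; simpa using hζγ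
  · exact hδ.conn_aux hRS ha hb hβ hζ horth hγR hpos hζγ

include hRS ha hb hβ in
theorem InT.conn {δ ζ : E} (hδ : InT Rpos μa μb β δ) (hζ : InT Rpos μa μb β ζ) :
    Conn R μa μb δ ζ := by
  obtain ⟨k, hk, hk1, hk2⟩ := hδ.pairing_bounds hRS hβ hζ
  have hδδne : ⟪δ, δ⟫ ≠ 0 := (root_inner_self_pos hRS (hδ.mem_R hRS hβ)).ne'
  interval_cases k
  · exact (hδ.not_neg_two hRS hβ hζ (by rw [hk]; norm_num)).elim
  · exact (hδ.not_neg_one hRS hb hβ hζ (by rw [hk]; norm_num)).elim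
  · refine hδ.conn_of_orth hRS ha hb hβ hζ ?_
    rw [inner_coroot] at hk
    simp only [Int.cast_zero] at hk
    rcases mul_eq_zero.mp hk with h | h
    · exfalso
      rcases div_eq_zero_iff.mp h with h' | h'
      · norm_num at h'
      · exact hδδne h'
    · exact h
  · exact hδ.conn_of_one hRS hβ hζ (by rw [hk]; norm_num)
  · have : ζ = δ := hδ.eq_of_two hRS hβ hζ (by rw [hk]; norm_num)
    rw [this]
    exact conn_refl δ

end Final


/-- the `(W_{μ_a} ∩ W_{μ_b})`-orbit of `β` equals the set of positive roots `α`
orthogonal to `μ_a` with `⟨μ_b, α∨⟩ = 2` of the same length as `β`. -/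
theorem orbit_eq_roots_of_same_length (R Rpos : Finset E) (hRS : IsRootSystem R Rpos)
    (μa μb : E) (ha : IsSmall R Rpos μa) (hb : IsSmall R Rpos μb)
    (hab : domLT Rpos μa μb)
    (β : E) (hβ : β ∈ Rpos) (hβa : ⟪μa, β⟫ = 0) (hβb : ⟪μb, coroot β⟫ = 2) :
    {y : E | ∃ w ∈ weylGroup R, w μa = μa ∧ w μb = μb ∧ w β = y}
      = {α : E | α ∈ Rpos ∧ ⟪μa, α⟫ = 0 ∧ ⟪μb, coroot α⟫ = 2 ∧ ⟪α, α⟫ = ⟪β, β⟫} := by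
  have hβT : InT Rpos μa μb β β := ⟨hβ, hβa, hβb, rfl⟩
  have hβR : β ∈ R := hRS.pos_subset hβ
  have hL : 0 < ⟪β, β⟫ := lsq_pos hRS hβ
  ext y
  simp only [Set.mem_setOf_eq]
  constructor
  · rintro ⟨w, hw, h1, h2, h3⟩
    have hyR : y ∈ R := by
      rw [← h3]
      exact weyl_maps_root hRS w hw β hβR
    have hyy : ⟪y, y⟫ = ⟪β, β⟫ := by
      rw [← h3, w.inner_map_map]
    have hμby : ⟪μb, y⟫ = ⟪β, β⟫ := by
      rw [← h3, ← h2, w.inner_map_map]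
      exact hβT.inner_mub hRS hβ
    have hμay : ⟪μa, y⟫ = 0 := by
      rw [← h3, ← h1, w.inner_map_map, hβa]
    refine ⟨pos_of_inner_pos hRS hb.1 hyR (by rw [hμby]; exact hL), hμay, ?_, hyy⟩
    rw [← h3, map_coroot, ← h2, w.inner_map_map, hβb]
  · rintro ⟨h1, h2, h3, h4⟩
    exact hβT.conn hRS ha hb hβ ⟨h1, h2, h3, h4⟩
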